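/- Let r₁, r₂, c > 0 with r₁² + r₂² = 1. With f(u₁) = cosh(r₂√c u₁), g(u₂) = (r₂/r₁)sinh(r₁√c u₂), Ω = r₁r₂(f+g), W = r₂²f − r₁²g, S = (1+c)(Ω²+W²), define X̃: ℝ² → ℝ⁴ by X̃ = (1/S)·((r₁S − 2r₁Ω² − 2r₂ΩW)cos(r₂u₁) + 2f'Ω sin(r₂u₁), (r₁S − 2r₁Ω² − 2r₂ΩW)sin(r₂u₁) − 2f'Ω cos(r₂u₁), (r₂S − 2r₂Ω² + 2r₁ΩW)cos(r₁u₂) + 2g'Ω sin(r₁u₂), (r₂S − 2r₂Ω² + 2r₁ΩW)sin(r₁u₂) − 2g'Ω cos(r₁u₂)). Then ‖X̃(u₁,u₂)‖ = 1 for all (u₁,u₂) ∈ ℝ², i.e., X̃ takes values in S³. -/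

import Mathlib

open Real

noncomputable def vec4 (a b c d : ℝ) : EuclideanSpace ℝ (Fin 4) :=
  (WithLp.equiv 2 (Fin 4 → ℝ)).symm ![a, b, c, d]

lemma norm_vec4 (a b c d : ℝ) : ‖vec4 a b c d‖ = Real.sqrt (a^2 + b^2 + c^2 + d^2) := by
  simp [vec4, EuclideanSpace.norm_eq, Fin.sum_univ_four, Real.norm_eq_abs, sq_abs]

lemma trig_aux (A B θ : ℝ) :
    (A * Real.cos θ + B * Real.sin θ)^2 + (A * Real.sin θ - B * Real.cos θ)^2 = A^2 + B^2 := by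
  linear_combination (A^2 + B^2) * (Real.sin_sq_add_cos_sq θ)

theorem stmt_16 (r1 r2 c : ℝ) (hr1 : 0 < r1) (hr2 : 0 < r2) (hc : 0 < c)
    (h : r1 ^ 2 + r2 ^ 2 = 1)
    (f g : ℝ → ℝ) (Ω W S : ℝ → ℝ → ℝ)
    (hf : ∀ u1, f u1 = Real.cosh (r2 * Real.sqrt c * u1))
    (hg : ∀ u2, g u2 = (r2 / r1) * Real.sinh (r1 * Real.sqrt c * u2))
    (hΩ : ∀ u1 u2, Ω u1 u2 = r1 * r2 * (f u1 + g u2))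
    (hW : ∀ u1 u2, W u1 u2 = r2 ^ 2 * f u1 - r1 ^ 2 * g u2)
    (hS : ∀ u1 u2, S u1 u2 = (1 + c) * ((Ω u1 u2) ^ 2 + (W u1 u2) ^ 2))
    (Xt : ℝ → ℝ → EuclideanSpace ℝ (Fin 4))
    (hXt : ∀ u1 u2, Xt u1 u2 = (S u1 u2)⁻¹ •
      vec4
        ((r1 * S u1 u2 - 2 * r1 * (Ω u1 u2) ^ 2 - 2 * r2 * Ω u1 u2 * W u1 u2) * cos (r2 * u1)
          + 2 * deriv f u1 * Ω u1 u2 * sin (r2 * u1))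
        ((r1 * S u1 u2 - 2 * r1 * (Ω u1 u2) ^ 2 - 2 * r2 * Ω u1 u2 * W u1 u2) * sin (r2 * u1)
          - 2 * deriv f u1 * Ω u1 u2 * cos (r2 * u1))
        ((r2 * S u1 u2 - 2 * r2 * (Ω u1 u2) ^ 2 + 2 * r1 * Ω u1 u2 * W u1 u2) * cos (r1 * u2)
          + 2 * deriv g u2 * Ω u1 u2 * sin (r1 * u2))
        ((r2 * S u1 u2 - 2 * r2 * (Ω u1 u2) ^ 2 + 2 * r1 * Ω u1 u2 * W u1 u2) * sin (r1 * u2)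
          - 2 * deriv g u2 * Ω u1 u2 * cos (r1 * u2))) :
    ∀ u1 u2 : ℝ, ‖Xt u1 u2‖ = 1 := by
  intro u1 u2
  have hsq : Real.sqrt c ^ 2 = c := Real.sq_sqrt hc.le
  -- derivatives
  have hdf : deriv f u1 = Real.sinh (r2 * Real.sqrt c * u1) * (r2 * Real.sqrt c) := by
    have hfx : f = fun x => Real.cosh (r2 * Real.sqrt c * x) := funext hf
    rw [hfx]
    have h1 : HasDerivAt (fun x : ℝ => r2 * Real.sqrt c * x) (r2 * Real.sqrt c) u1 := by
      simpa using (hasDerivAt_id u1).const_mul (r2 * Real.sqrt c)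
    exact h1.cosh.deriv
  have hdg : deriv g u2 = (r2 / r1) * (Real.cosh (r1 * Real.sqrt c * u2) * (r1 * Real.sqrt c)) := by
    have hgx : g = fun x => (r2 / r1) * Real.sinh (r1 * Real.sqrt c * x) := funext hg
    rw [hgx]
    have h1 : HasDerivAt (fun x : ℝ => r1 * Real.sqrt c * x) (r1 * Real.sqrt c) u2 := by
      simpa using (hasDerivAt_id u2).const_mul (r1 * Real.sqrt c)
    exact ((h1.sinh).const_mul (r2 / r1)).deriv
  set F := f u1 with hF
  set G := g u2 with hG
  set o := Ω u1 u2 with ho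
  set w := W u1 u2 with hw
  set s := S u1 u2 with hs
  have hΩ' : o = r1 * r2 * (F + G) := hΩ u1 u2
  have hW' : w = r2 ^ 2 * F - r1 ^ 2 * G := hW u1 u2
  have hS' : s = (1 + c) * (o ^ 2 + w ^ 2) := hS u1 u2
  have e3 : o ^ 2 + w ^ 2 = r2 ^ 2 * F ^ 2 + r1 ^ 2 * G ^ 2 := by
    rw [hΩ', hW']
    linear_combination (r2 ^ 2 * F ^ 2 + r1 ^ 2 * G ^ 2) * h
  have e4 : (deriv f u1) ^ 2 = c * r2 ^ 2 * (F ^ 2 - 1) := by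
    rw [hdf, hF, hf]
    have h1 := Real.cosh_sq_sub_sinh_sq (r2 * Real.sqrt c * u1)
    linear_combination (r2^2 * Real.sinh (r2 * Real.sqrt c * u1)^2) * hsq - (c*r2^2) * h1
  have e5 : (deriv g u2) ^ 2 = c * (r2 ^ 2 + r1 ^ 2 * G ^ 2) := by
    rw [hdg, hG, hg]
    have h1 := Real.cosh_sq_sub_sinh_sq (r1 * Real.sqrt c * u2)
    field_simp
    linear_combination (Real.cosh (r1 * Real.sqrt c * u2)^2) * hsq + c * h1
  have hf1 : 1 ≤ F := by rw [hF, hf]; exact Real.one_le_cosh _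
  have hSpos : 0 < s := by
    rw [hS', e3]
    have : (0:ℝ) < r2 ^ 2 * F ^ 2 := by positivity
    nlinarith
  have key : (r1 * s - 2 * r1 * o ^ 2 - 2 * r2 * o * w) ^ 2 + (2 * deriv f u1 * o) ^ 2
      + ((r2 * s - 2 * r2 * o ^ 2 + 2 * r1 * o * w) ^ 2 + (2 * deriv g u2 * o) ^ 2) = s ^ 2 := by
    linear_combination (4*o^2) * e4 + (4*o^2) * e5 +
      (s^2 + 4*o^4 + 4*o^2*w^2 - 4*s*o^2) * h + (-4*o^2*c) * e3 + (-4*o^2) * hS'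
  have hsum : ((r1 * s - 2 * r1 * o ^ 2 - 2 * r2 * o * w) * cos (r2 * u1)
          + 2 * deriv f u1 * o * sin (r2 * u1)) ^ 2
      + ((r1 * s - 2 * r1 * o ^ 2 - 2 * r2 * o * w) * sin (r2 * u1)
          - 2 * deriv f u1 * o * cos (r2 * u1)) ^ 2
      + ((r2 * s - 2 * r2 * o ^ 2 + 2 * r1 * o * w) * cos (r1 * u2)
          + 2 * deriv g u2 * o * sin (r1 * u2)) ^ 2
      + ((r2 * s - 2 * r2 * o ^ 2 + 2 * r1 * o * w) * sin (r1 * u2)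
          - 2 * deriv g u2 * o * cos (r1 * u2)) ^ 2 = s ^ 2 := by
    have t1 := trig_aux (r1 * s - 2 * r1 * o ^ 2 - 2 * r2 * o * w) (2 * deriv f u1 * o) (r2 * u1)
    have t2 := trig_aux (r2 * s - 2 * r2 * o ^ 2 + 2 * r1 * o * w) (2 * deriv g u2 * o) (r1 * u2)
    linear_combination t1 + t2 + key
  rw [hXt, norm_smul, norm_vec4, ← ho, ← hw, ← hs, hsum, Real.sqrt_sq hSpos.le,
    norm_inv, Real.norm_eq_abs, abs_of_pos hSpos, inv_mul_cancel₀ hSpos.ne']
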